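/- arXiv:0711.3411 — 2 statements merged into one kernel-verified Lean document; each statement's English description precedes it below -/
import Mathlib

section
/- For a differentiable curve of invertible symmetric matrices C(t), the vector field identity Y⟨C⁻¹(|t|)x, x⟩ = 4⟨x, B C⁻¹(|t|) x⟩ - ⟨C⁻¹(|t|)x, A₀ C⁻¹(|t|)x⟩ holds for t < 0, where Y = ⟨x, B D⟩ - ∂_t, C(s) = ∫₀ˢ E(r) A₀ E(r)ᵀ dr with E(r) = exp(-r Bᵀ), assuming C(|t|) is invertible. -/
open Matrix

section AuxY

attribute [local instance] Matrix.linftyOpNormedRing Matrix.linftyOpNormedAlgebra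

theorem aux_Y
    (N : ℕ) (B A₀ : Matrix (Fin N) (Fin N) ℝ) (hA₀ : A₀ᵀ = A₀)
    (E : ℝ → Matrix (Fin N) (Fin N) ℝ)
    (hE : ∀ r : ℝ, E r = NormedSpace.exp (-r • Bᵀ))
    (C : ℝ → Matrix (Fin N) (Fin N) ℝ)
    (hC : ∀ s : ℝ, ∀ i j : Fin N, C s i j = ∫ r in (0:ℝ)..s, (E r * A₀ * (E r)ᵀ) i j)
    (hinv : ∀ s : ℝ, 0 < s → IsUnit (C s).det)
    (u : ((Fin N → ℝ) × ℝ) → ℝ)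
    (hu : ∀ z : ((Fin N → ℝ) × ℝ), u z = (C |z.2|)⁻¹.mulVec z.1 ⬝ᵥ z.1)
    (x : Fin N → ℝ) (t : ℝ) (ht : t < 0) :
    (∑ i : Fin N, ∑ j : Fin N,
        B i j * x i * fderiv ℝ u (x, t) (Pi.single j 1, 0))
      - fderiv ℝ u (x, t) (0, 1)
    = 4 * (x ⬝ᵥ B.mulVec ((C |t|)⁻¹.mulVec x))
      - ((C |t|)⁻¹.mulVec x ⬝ᵥ A₀.mulVec ((C |t|)⁻¹.mulVec x)) := by
  -- derivative of E
  have hEd : ∀ r : ℝ, HasDerivAt E (-Bᵀ * E r) r := by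
    intro r
    have h0 : ∀ r : ℝ, E r = NormedSpace.exp (r • (-Bᵀ)) := by
      intro r; rw [hE]; congr 1; rw [neg_smul, smul_neg]
    rw [funext h0]
    exact hasDerivAt_exp_smul_const' (-Bᵀ) r
  have hEc : Continuous E := continuous_iff_continuousAt.2 fun r => (hEd r).continuousAt
  have hE0 : E 0 = 1 := by rw [hE]; simp [NormedSpace.exp_zero]
  -- transpose as CLM
  let T : Matrix (Fin N) (Fin N) ℝ →L[ℝ] Matrix (Fin N) (Fin N) ℝ :=
    LinearMap.toContinuousLinearMap (Matrix.transposeLinearEquiv (Fin N) (Fin N) ℝ ℝ).toLinearMap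
  have hT : ∀ A : Matrix (Fin N) (Fin N) ℝ, T A = Aᵀ := fun A => rfl
  -- h and its facts
  set h : ℝ → Matrix (Fin N) (Fin N) ℝ := fun r => E r * A₀ * (E r)ᵀ with hh
  have hETd : ∀ r : ℝ, HasDerivAt (fun r => (E r)ᵀ) (-((E r)ᵀ * B)) r := by
    intro r
    have := (T.hasFDerivAt.comp_hasDerivAt r (hEd r))
    have this : HasDerivAt (fun r => (E r)ᵀ) ((-Bᵀ * E r)ᵀ) r := this
    convert this using 1
    rw [Matrix.transpose_mul, Matrix.transpose_neg, Matrix.transpose_transpose]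
    noncomm_ring
  have hhd : ∀ r : ℝ, HasDerivAt h (-(Bᵀ * h r + h r * B)) r := by
    intro r
    have h1 : HasDerivAt (fun r => E r * A₀) (-Bᵀ * E r * A₀) r := (hEd r).mul_const A₀
    have h2 : HasDerivAt h (-Bᵀ * E r * A₀ * (E r)ᵀ + E r * A₀ * -((E r)ᵀ * B)) r :=
      h1.mul (hETd r)
    convert h2 using 1
    simp only [hh]
    noncomm_ring
  have hhc : Continuous h := continuous_iff_continuousAt.2 fun r => (hhd r).continuousAt
  have hh0 : h 0 = A₀ := by simp [hh, hE0]
  -- entry CLM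
  let P : Fin N → Fin N → (Matrix (Fin N) (Fin N) ℝ →L[ℝ] ℝ) := fun i j =>
    LinearMap.toContinuousLinearMap (Matrix.entryLinearMap ℝ ℝ i j)
  have hP : ∀ (i j) (A : Matrix (Fin N) (Fin N) ℝ), P i j A = A i j := fun _ _ _ => rfl
  -- C as Bochner integral
  have hCint : ∀ s : ℝ, C s = ∫ r in (0:ℝ)..s, h r := by
    intro s
    ext i j
    rw [hC s i j, ← hP i j (∫ r in (0:ℝ)..s, h r)]
    exact (P i j).intervalIntegral_comp_comm (hhc.intervalIntegrable 0 s)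
  have hCd : ∀ s : ℝ, HasDerivAt C (h s) s := by
    intro s
    have := (hhc.integral_hasStrictDerivAt 0 s).hasDerivAt
    rw [funext hCint]
    exact this
  -- symmetry
  have hhsymm : ∀ r : ℝ, (h r)ᵀ = h r := by
    intro r
    simp only [hh, Matrix.transpose_mul, Matrix.transpose_transpose, hA₀, mul_assoc]
  have hCsymm : ∀ s : ℝ, (C s)ᵀ = C s := by
    intro s
    ext i j
    rw [Matrix.transpose_apply, hC s i j, hC s j i]
    have h2 : ∀ r : ℝ, (E r * A₀ * (E r)ᵀ) j i = (E r * A₀ * (E r)ᵀ) i j := by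
      intro r
      have := congrFun (congrFun (hhsymm r) i) j
      simpa using this
    simp_rw [h2]
  -- key identity : Bᵀ * C s + C s * B = A₀ - h s
  have hkey : ∀ s : ℝ, Bᵀ * C s + C s * B = A₀ - h s := by
    intro s
    have hint : (∫ r in (0:ℝ)..s, -(Bᵀ * h r + h r * B)) = h s - h 0 := by
      apply intervalIntegral.integral_eq_sub_of_hasDerivAt (fun r _ => hhd r)
      exact (((continuous_const.mul hhc).add (hhc.mul continuous_const)).neg).intervalIntegrable 0 s
    have hL : Bᵀ * C s = ∫ r in (0:ℝ)..s, Bᵀ * h r := by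
      rw [hCint s]
      calc Bᵀ * ∫ r in (0:ℝ)..s, h r
          = (ContinuousLinearMap.mul ℝ (Matrix (Fin N) (Fin N) ℝ) Bᵀ)
            (∫ r in (0:ℝ)..s, h r) := rfl
        _ = ∫ r in (0:ℝ)..s,
            (ContinuousLinearMap.mul ℝ (Matrix (Fin N) (Fin N) ℝ) Bᵀ) (h r) :=
            (ContinuousLinearMap.intervalIntegral_comp_comm _
              (hhc.intervalIntegrable 0 s)).symm
        _ = ∫ r in (0:ℝ)..s, Bᵀ * h r := rfl
    have hR : C s * B = ∫ r in (0:ℝ)..s, h r * B := by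
      rw [hCint s]
      calc (∫ r in (0:ℝ)..s, h r) * B
          = ((ContinuousLinearMap.mul ℝ (Matrix (Fin N) (Fin N) ℝ)).flip B)
            (∫ r in (0:ℝ)..s, h r) := rfl
        _ = ∫ r in (0:ℝ)..s,
            ((ContinuousLinearMap.mul ℝ (Matrix (Fin N) (Fin N) ℝ)).flip B) (h r) :=
            (ContinuousLinearMap.intervalIntegral_comp_comm _
              (hhc.intervalIntegrable 0 s)).symm
        _ = ∫ r in (0:ℝ)..s, h r * B := rfl
    rw [hL, hR, ← intervalIntegral.integral_add
        ((continuous_const.fun_mul hhc).intervalIntegrable 0 s)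
        ((hhc.fun_mul continuous_const).intervalIntegrable 0 s)]
    have : (∫ r in (0:ℝ)..s, Bᵀ * h r + h r * B)
        = -∫ r in (0:ℝ)..s, -(Bᵀ * h r + h r * B) := by
      rw [intervalIntegral.integral_neg, neg_neg]
    rw [this, hint, hh0]
    abel
  -- setup at the point s₀ = -t
  have hs₀ : (0:ℝ) < -t := by linarith
  have hdet := hinv (-t) hs₀
  set M : Matrix (Fin N) (Fin N) ℝ := (C (-t))⁻¹ with hM
  have hMC : M * C (-t) = 1 := Matrix.nonsing_inv_mul _ hdet
  have hCM : C (-t) * M = 1 := Matrix.mul_nonsing_inv _ hdet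
  have hMsymm : Mᵀ = M := by
    rw [hM, Matrix.transpose_nonsing_inv, hCsymm]
  obtain ⟨U, hUeq⟩ := (Matrix.isUnit_iff_isUnit_det (C (-t))).2 hdet
  -- derivative of the matrix inverse curve
  have hinvd : HasDerivAt (fun s => (C s)⁻¹) (-(M * h (-t) * M)) (-t) := by
    have h1 := hasFDerivAt_ringInverse (𝕜 := ℝ) U
    rw [hUeq] at h1
    have h2 := h1.comp_hasDerivAt (-t) (hCd (-t))
    have h3 : Ring.inverse ∘ C = fun s : ℝ => (C s)⁻¹ := by
      funext s
      exact (Matrix.nonsing_inv_eq_ringInverse _).symm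
    rw [h3] at h2
    have hu' : (↑U⁻¹ : Matrix (Fin N) (Fin N) ℝ) = M := by
      rw [Matrix.coe_units_inv, hUeq]
    rw [hu'] at h2
    simp only [ContinuousLinearMap.neg_apply, ContinuousLinearMap.mulLeftRight_apply] at h2
    exact h2
  -- derivatives of the building blocks of u
  have hneg : HasFDerivAt (fun z : (Fin N → ℝ) × ℝ => -z.2)
      (-(ContinuousLinearMap.snd ℝ (Fin N → ℝ) ℝ)) (x, t) :=
    (-(ContinuousLinearMap.snd ℝ (Fin N → ℝ) ℝ)).hasFDerivAt
  have hmd : ∀ i j : Fin N, HasFDerivAt (fun z : (Fin N → ℝ) × ℝ => (C (-z.2))⁻¹ i j)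
      (((M * h (-t) * M) i j) • (ContinuousLinearMap.snd ℝ (Fin N → ℝ) ℝ)) (x, t) := by
    intro i j
    have hscal : HasDerivAt (fun s : ℝ => (C s)⁻¹ i j) ((-(M * h (-t) * M)) i j) (-t) := by
      have := (P i j).hasFDerivAt.comp_hasDerivAt (-t) hinvd
      exact this
    have h4 := hscal.comp_hasFDerivAt (x, t) hneg
    have h5 : ((-(M * h (-t) * M)) i j) • -(ContinuousLinearMap.snd ℝ (Fin N → ℝ) ℝ)
        = ((M * h (-t) * M) i j) • (ContinuousLinearMap.snd ℝ (Fin N → ℝ) ℝ) := by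
      simp [Matrix.neg_apply]
    rw [h5] at h4
    exact h4
  have hXd : ∀ i : Fin N, HasFDerivAt (fun z : (Fin N → ℝ) × ℝ => z.1 i)
      ((ContinuousLinearMap.proj i).comp (ContinuousLinearMap.fst ℝ (Fin N → ℝ) ℝ)) (x, t) :=
    fun i => ((ContinuousLinearMap.proj i).comp (ContinuousLinearMap.fst ℝ (Fin N → ℝ) ℝ)).hasFDerivAt
  -- full derivative of the local representative of u
  set L : Fin N → ((Fin N → ℝ) × ℝ) →L[ℝ] ℝ := fun i =>
    (ContinuousLinearMap.proj i).comp (ContinuousLinearMap.fst ℝ (Fin N → ℝ) ℝ) with hL'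
  set S : ((Fin N → ℝ) × ℝ) →L[ℝ] ℝ := ContinuousLinearMap.snd ℝ (Fin N → ℝ) ℝ with hS'
  set D : ((Fin N → ℝ) × ℝ) →L[ℝ] ℝ :=
    ∑ i : Fin N, ∑ j : Fin N,
      (((C (-t))⁻¹ i j * x j) • L i +
        x i • ((C (-t))⁻¹ i j • L j + x j • (((M * h (-t) * M) i j) • S))) with hD
  have hqd : HasFDerivAt
      (fun z : (Fin N → ℝ) × ℝ => ∑ i : Fin N, ∑ j : Fin N, (C (-z.2))⁻¹ i j * z.1 j * z.1 i)
      D (x, t) := by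
    rw [hD]
    apply HasFDerivAt.fun_sum
    intro i _
    apply HasFDerivAt.fun_sum
    intro j _
    exact ((hmd i j).mul (hXd j)).mul (hXd i)
  -- u agrees with this representative near (x, t)
  have heq : u =ᶠ[nhds (x, t)] fun z : (Fin N → ℝ) × ℝ =>
      ∑ i : Fin N, ∑ j : Fin N, (C (-z.2))⁻¹ i j * z.1 j * z.1 i := by
    have hopen : IsOpen {z : (Fin N → ℝ) × ℝ | z.2 < 0} :=
      isOpen_lt continuous_snd continuous_const
    filter_upwards [hopen.mem_nhds (show (x, t).2 < 0 from ht)] with z hz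
    rw [hu z, abs_of_neg hz]
    simp only [dotProduct, Matrix.mulVec, Finset.sum_mul]
  have hud : HasFDerivAt u D (x, t) := hqd.congr_of_eventuallyEq heq
  have hfd : fderiv ℝ u (x, t) = D := hud.fderiv
  -- evaluate the derivative in the two directions
  have hval1 : ∀ k : Fin N, fderiv ℝ u (x, t) (Pi.single k 1, 0) = 2 * (M.mulVec x) k := by
    intro k
    rw [hfd, hD]
    simp only [ContinuousLinearMap.coe_sum', Finset.sum_apply,
      ContinuousLinearMap.add_apply, ContinuousLinearMap.coe_smul', Pi.smul_apply,
      ContinuousLinearMap.coe_comp', Function.comp_apply, hL', hS',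
      ContinuousLinearMap.coe_fst', ContinuousLinearMap.proj_apply,
      ContinuousLinearMap.coe_snd', smul_eq_mul, mul_zero, add_zero]
    simp only [Pi.single_apply]
    rw [Finset.sum_comm]
    simp only [mul_ite, mul_one, mul_zero, Finset.sum_ite_eq', Finset.mem_univ, if_true]
    simp only [Finset.sum_add_distrib]
    have e1 : (∑ a : Fin N, ∑ b : Fin N,
        (if b = k then (C (-t))⁻¹ b a * x a else 0)) = (M *ᵥ x) k := by
      simp only [Finset.sum_ite_eq', Finset.mem_univ, if_true]
      simp [Matrix.mulVec, dotProduct, hM]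
    have e2 : (∑ a : Fin N, ∑ b : Fin N,
        (if a = k then x b * (C (-t))⁻¹ b a else 0)) = (M *ᵥ x) k := by
      rw [Finset.sum_comm]
      simp only [Finset.sum_ite_eq', Finset.mem_univ, if_true]
      have hsym : ∀ a b : Fin N, (C (-t))⁻¹ a b = (C (-t))⁻¹ b a := fun a b =>
        congrFun (congrFun hMsymm b) a
      simp only [Matrix.mulVec, dotProduct, hM]
      refine Finset.sum_congr rfl fun b _ => ?_
      rw [hsym b k, mul_comm]
    rw [e1, e2]
    ring
  -- evaluate in the time direction
  have hval2 : fderiv ℝ u (x, t) (0, 1) = (M * h (-t) * M) *ᵥ x ⬝ᵥ x := by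
    rw [hfd, hD]
    simp only [ContinuousLinearMap.coe_sum', Finset.sum_apply,
      ContinuousLinearMap.add_apply, ContinuousLinearMap.coe_smul', Pi.smul_apply,
      ContinuousLinearMap.coe_comp', Function.comp_apply, hL', hS',
      ContinuousLinearMap.coe_fst', ContinuousLinearMap.proj_apply,
      ContinuousLinearMap.coe_snd', smul_eq_mul, Pi.zero_apply, mul_zero, zero_add,
      mul_one, zero_mul, add_zero]
    simp only [Matrix.mulVec, dotProduct, Finset.sum_mul]
    refine Finset.sum_congr rfl fun i _ => ?_
    refine Finset.sum_congr rfl fun j _ => ?_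
    ring
  -- the structure identity for M * h(-t) * M
  have hMhM : M * h (-t) * M = M * A₀ * M - M * Bᵀ - B * M := by
    have h5 : h (-t) = A₀ - (Bᵀ * C (-t) + C (-t) * B) := by
      rw [hkey (-t)]
      abel
    rw [h5]
    have e3 : M * (A₀ - (Bᵀ * C (-t) + C (-t) * B)) * M
        = M * A₀ * M - (M * Bᵀ * (C (-t) * M)) - (M * C (-t) * (B * M)) := by
      noncomm_ring
    rw [e3, hCM, hMC, mul_one, one_mul]
  -- scalar identities
  have c1 : (M * A₀ * M) *ᵥ x ⬝ᵥ x = (M *ᵥ x) ⬝ᵥ A₀ *ᵥ (M *ᵥ x) := by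
    rw [← Matrix.mulVec_mulVec, ← Matrix.mulVec_mulVec, dotProduct_comm,
      dotProduct_mulVec]
    congr 1
    conv_lhs => rw [← hMsymm, Matrix.vecMul_transpose]
  have c2 : (M * Bᵀ) *ᵥ x ⬝ᵥ x = x ⬝ᵥ B *ᵥ (M *ᵥ x) := by
    rw [← Matrix.mulVec_mulVec, dotProduct_comm, dotProduct_mulVec]
    have : x ᵥ* M = M *ᵥ x := by
      conv_lhs => rw [← hMsymm, Matrix.vecMul_transpose]
    rw [this, dotProduct_comm, Matrix.mulVec_transpose, ← dotProduct_mulVec]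
  have c3 : (B * M) *ᵥ x ⬝ᵥ x = x ⬝ᵥ B *ᵥ (M *ᵥ x) := by
    rw [← Matrix.mulVec_mulVec, dotProduct_comm]
  -- conclude
  rw [abs_of_neg ht, ← hM]
  simp only [hval1, hval2]
  rw [hMhM, Matrix.sub_mulVec, Matrix.sub_mulVec, sub_dotProduct,
    sub_dotProduct, c1, c2, c3]
  have eA : ∑ i : Fin N, ∑ j : Fin N, B i j * x i * (2 * (M *ᵥ x) j)
      = 2 * (x ⬝ᵥ B *ᵥ (M *ᵥ x)) := by
    simp only [dotProduct, Matrix.mulVec, Finset.mul_sum]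
    refine Finset.sum_congr rfl fun i _ => ?_
    refine Finset.sum_congr rfl fun j _ => ?_
    refine Finset.sum_congr rfl fun k _ => ?_
    ring
  rw [eA]
  ring

end AuxY

/-- For `t < 0`, the vector field identity
`Y⟨C⁻¹(|t|)x, x⟩ = 4⟨x, B C⁻¹(|t|) x⟩ - ⟨C⁻¹(|t|)x, A₀ C⁻¹(|t|)x⟩`, where
`Y = ⟨x, B D⟩ - ∂_t`, `C(s) = ∫₀ˢ E(r) A₀ E(r)ᵀ dr`, `E(r) = exp(-r Bᵀ)`,
assuming `C(s)` is invertible for `s > 0`. -/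
theorem Y_of_inverse_covariance_quadratic_form
    (N : ℕ) (B A₀ : Matrix (Fin N) (Fin N) ℝ) (hA₀ : A₀ᵀ = A₀)
    (E : ℝ → Matrix (Fin N) (Fin N) ℝ)
    (hE : ∀ r : ℝ, E r = NormedSpace.exp (-r • Bᵀ))
    (C : ℝ → Matrix (Fin N) (Fin N) ℝ)
    (hC : ∀ s : ℝ, ∀ i j : Fin N, C s i j = ∫ r in (0:ℝ)..s, (E r * A₀ * (E r)ᵀ) i j)
    (hinv : ∀ s : ℝ, 0 < s → IsUnit (C s).det)
    (u : ((Fin N → ℝ) × ℝ) → ℝ)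
    (hu : ∀ z : ((Fin N → ℝ) × ℝ), u z = (C |z.2|)⁻¹.mulVec z.1 ⬝ᵥ z.1)
    (x : Fin N → ℝ) (t : ℝ) (ht : t < 0) :
    (∑ i : Fin N, ∑ j : Fin N,
        B i j * x i * fderiv ℝ u (x, t) (Pi.single j 1, 0))
      - fderiv ℝ u (x, t) (0, 1)
    = 4 * (x ⬝ᵥ B.mulVec ((C |t|)⁻¹.mulVec x))
      - ((C |t|)⁻¹.mulVec x ⬝ᵥ A₀.mulVec ((C |t|)⁻¹.mulVec x)) := by
  exact aux_Y N B A₀ hA₀ E hE C hC hinv u hu x t ht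
end

section
/- If the block matrix B₀ is strictly block upper triangular with blocks B₁,...,B_d on the superdiagonal (with respect to the partition N = m₀ + m₁ + ⋯ + m_d), then the matrix C₀(t) = ∫₀ᵗ E₀(s) A₀ E₀(s)ᵀ ds, where E₀(s) = exp(-s B₀ᵀ) and A₀ = diag(I_{m₀}, 0), satisfies the scaling law C₀(t) = D_{√t} C₀(1) D_{√t} for all t > 0, where D_λ = diag(λ I_{m₀}, λ³ I_{m₁}, ..., λ^{2d+1} I_{m_d}). -/
open Matrix

/-- If `B₀` is strictly block upper triangular with blocks only on the block superdiagonal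
(with respect to the partition `N = m₀ + ⋯ + m_d`), then
`C₀(t) = ∫₀ᵗ E₀(s) A₀ E₀(s)ᵀ ds`, with `E₀(s) = exp(-s B₀ᵀ)` and `A₀ = diag(I_{m₀}, 0)`,
satisfies `C₀(t) = D_{√t} C₀(1) D_{√t}` for all `t > 0`, where
`D_λ = diag(λ I_{m₀}, λ³ I_{m₁}, ..., λ^{2d+1} I_{m_d})`. -/
theorem covariance_scaling_law
    (d : ℕ) (m : Fin (d + 1) → ℕ)
    (hm : ∀ k l : Fin (d + 1), k ≤ l → m l ≤ m k)
    (B₀ : Matrix (Σ k : Fin (d + 1), Fin (m k)) (Σ k : Fin (d + 1), Fin (m k)) ℝ)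
    (hB₀ : ∀ p q : Σ k : Fin (d + 1), Fin (m k),
      B₀ p q ≠ 0 → (q.1 : ℕ) = (p.1 : ℕ) + 1)
    (A₀ : Matrix (Σ k : Fin (d + 1), Fin (m k)) (Σ k : Fin (d + 1), Fin (m k)) ℝ)
    (hA₀ : A₀ = Matrix.diagonal (fun p => if (p.1 : ℕ) = 0 then (1 : ℝ) else 0))
    (E₀ : ℝ → Matrix (Σ k : Fin (d + 1), Fin (m k)) (Σ k : Fin (d + 1), Fin (m k)) ℝ)
    (hE₀ : ∀ s : ℝ, E₀ s = NormedSpace.exp (-s • B₀ᵀ))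
    (C₀ : ℝ → Matrix (Σ k : Fin (d + 1), Fin (m k)) (Σ k : Fin (d + 1), Fin (m k)) ℝ)
    (hC₀ : ∀ t : ℝ, ∀ p q : Σ k : Fin (d + 1), Fin (m k),
      C₀ t p q = ∫ s in (0:ℝ)..t, (E₀ s * A₀ * (E₀ s)ᵀ) p q)
    (D : ℝ → Matrix (Σ k : Fin (d + 1), Fin (m k)) (Σ k : Fin (d + 1), Fin (m k)) ℝ)
    (hD : ∀ lam : ℝ, D lam = Matrix.diagonal (fun p => lam ^ (2 * (p.1 : ℕ) + 1))) :
    ∀ t : ℝ, 0 < t → C₀ t = D (Real.sqrt t) * C₀ 1 * D (Real.sqrt t) := by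
  intro t ht
  set lam := Real.sqrt t with hlam
  have hlampos : 0 < lam := Real.sqrt_pos.mpr ht
  have hlamne : lam ≠ 0 := ne_of_gt hlampos
  have htlam : lam ^ 2 = t := Real.sq_sqrt ht.le
  have htne : t ≠ 0 := ne_of_gt ht
  -- the dilation matrix and its inverse
  set Dl : Matrix (Σ k : Fin (d + 1), Fin (m k)) (Σ k : Fin (d + 1), Fin (m k)) ℝ :=
    Matrix.diagonal (fun p => lam ^ (2 * (p.1 : ℕ) + 1)) with hDl
  set Di : Matrix (Σ k : Fin (d + 1), Fin (m k)) (Σ k : Fin (d + 1), Fin (m k)) ℝ :=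
    Matrix.diagonal (fun p => (lam ^ (2 * (p.1 : ℕ) + 1))⁻¹) with hDi
  have hDlDi : Dl * Di = 1 := by
    rw [hDl, hDi, Matrix.diagonal_mul_diagonal, ← Matrix.diagonal_one]
    congr 1; funext p; field_simp
  have hDiDl : Di * Dl = 1 := by
    rw [hDi, hDl, Matrix.diagonal_mul_diagonal, ← Matrix.diagonal_one]
    congr 1; funext p; field_simp
  -- commutation relation
  have hDB : Dl * B₀ᵀ = (lam ^ 2) • (B₀ᵀ * Dl) := by
    ext p q
    simp only [hDl, Matrix.diagonal_mul, Matrix.mul_diagonal, Matrix.smul_apply,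
      Matrix.transpose_apply, smul_eq_mul]
    by_cases h : B₀ q p = 0
    · simp [h]
    · rw [hB₀ q p h]; ring
  have hconj : ∀ s : ℝ, Dl * (-s • B₀ᵀ) * Di = (-(t * s)) • B₀ᵀ := by
    intro s
    calc Dl * (-s • B₀ᵀ) * Di = (-s) • (Dl * B₀ᵀ * Di) := by
          rw [Matrix.mul_smul, Matrix.smul_mul]
      _ = (-s) • ((lam ^ 2) • (B₀ᵀ * Dl * Di)) := by rw [hDB, Matrix.smul_mul]
      _ = (-(t * s)) • B₀ᵀ := by
          rw [Matrix.mul_assoc, hDlDi, Matrix.mul_one, smul_smul, htlam]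
          congr 1; ring
  -- scaling of the exponential
  have hEscale : ∀ s : ℝ, E₀ (t * s) = Dl * E₀ s * Di := by
    intro s
    rw [hE₀, hE₀, ← hconj s]
    exact Matrix.exp_units_conj ⟨Dl, Di, hDlDi, hDiDl⟩ (-s • B₀ᵀ)
  -- scaling of A₀ under Di conjugation
  have hDiA : Di * A₀ * Di = t⁻¹ • A₀ := by
    ext p q
    rw [hA₀, hDi, Matrix.diagonal_mul_diagonal, Matrix.diagonal_mul_diagonal,
      Matrix.smul_apply, Matrix.diagonal_apply, Matrix.diagonal_apply, smul_eq_mul]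
    by_cases hpq : p = q
    · subst hpq
      simp only [if_pos rfl]
      by_cases h : (p.1 : ℕ) = 0
      · simp only [h, if_true, ite_true, Nat.mul_zero, zero_add, pow_one, mul_one]
        rw [← htlam, sq, mul_inv]
      · simp [h]
    · simp [hpq]
  -- entrywise scaling of the integrand
  have hint : ∀ s : ℝ, ∀ p q : Σ k : Fin (d + 1), Fin (m k),
      (E₀ (t * s) * A₀ * (E₀ (t * s))ᵀ) p q
        = (t⁻¹ * lam ^ (2 * (p.1 : ℕ) + 1) * lam ^ (2 * (q.1 : ℕ) + 1))
            * (E₀ s * A₀ * (E₀ s)ᵀ) p q := by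
    intro s p q
    have hDit : Diᵀ = Di := by rw [hDi, Matrix.diagonal_transpose]
    have hDlt : Dlᵀ = Dl := by rw [hDl, Matrix.diagonal_transpose]
    have key : E₀ (t * s) * A₀ * (E₀ (t * s))ᵀ
        = t⁻¹ • (Dl * (E₀ s * A₀ * (E₀ s)ᵀ) * Dl) := by
      rw [hEscale s, Matrix.transpose_mul, Matrix.transpose_mul, hDit, hDlt]
      have h1 : Dl * E₀ s * Di * A₀ * (Di * ((E₀ s)ᵀ * Dl))
          = Dl * E₀ s * (Di * A₀ * Di) * ((E₀ s)ᵀ * Dl) := by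
        simp only [Matrix.mul_assoc]
      rw [h1, hDiA]
      simp only [Matrix.mul_smul, Matrix.smul_mul, Matrix.mul_assoc]
    rw [key, Matrix.smul_apply, smul_eq_mul, hDl, Matrix.mul_diagonal,
      Matrix.diagonal_mul]
    ring
  -- now the integral computation, entrywise
  rw [hD]
  ext p q
  rw [hC₀ t p q, Matrix.mul_diagonal, Matrix.diagonal_mul]
  have hsub : (∫ s in (0:ℝ)..t, (E₀ s * A₀ * (E₀ s)ᵀ) p q)
      = t * ∫ s in (0:ℝ)..1, (E₀ (t * s) * A₀ * (E₀ (t * s))ᵀ) p q := by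
    rw [intervalIntegral.integral_comp_mul_left
      (fun s => (E₀ s * A₀ * (E₀ s)ᵀ) p q) htne]
    simp only [mul_zero, mul_one, smul_eq_mul, ← mul_assoc, mul_inv_cancel₀ htne, one_mul]
  rw [hsub]
  have hsimp : (∫ s in (0:ℝ)..1, (E₀ (t * s) * A₀ * (E₀ (t * s))ᵀ) p q)
      = (t⁻¹ * lam ^ (2 * (p.1 : ℕ) + 1) * lam ^ (2 * (q.1 : ℕ) + 1))
          * ∫ s in (0:ℝ)..1, (E₀ s * A₀ * (E₀ s)ᵀ) p q := by
    rw [← intervalIntegral.integral_const_mul]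
    exact intervalIntegral.integral_congr (fun s _ => hint s p q)
  rw [hsimp, ← hC₀ 1 p q]
  field_simp
end
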